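/- Let φ : ℤ → ℂ be a group homomorphism from the additive group ℤ to the additive group ℂ with φ ≠ 0, and let f : [0,∞) → ℝ be a non-decreasing function such that |φ(n)| ≤ f(log(1 + |n|)) for all n ∈ ℤ. Then limsup_{x→∞} f(x)·e^{−x} ≥ |φ(1)| > 0. In particular there is no such f satisfying f(x)·e^{−x} → 0 as x → ∞. -/

import Mathlib

open Filter

/-- Let `φ : ℤ → ℂ` be a nonzero homomorphism of additive groups and let
`f : [0,∞) → ℝ` be non-decreasing with `|φ n| ≤ f (log (1 + |n|))` for all `n : ℤ`.
Then `limsup_{x → ∞} f x * e^{-x} ≥ |φ 1| > 0`; in particular `f x * e^{-x}` does not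
tend to `0` as `x → ∞`. -/
theorem no_subexponential_bound_for_log_length
    (φ : ℤ →+ ℂ) (hφ : φ ≠ 0)
    (f : ℝ → ℝ) (hf : MonotoneOn f (Set.Ici (0 : ℝ)))
    (hbound : ∀ n : ℤ, ‖φ n‖ ≤ f (Real.log (1 + |(n : ℝ)|))) :
    0 < ‖φ 1‖ ∧
    (‖φ 1‖ : EReal) ≤
      Filter.limsup (fun x : ℝ => ((f x * Real.exp (-x) : ℝ) : EReal)) Filter.atTop ∧
    ¬ Filter.Tendsto (fun x : ℝ => f x * Real.exp (-x)) Filter.atTop (nhds 0) := by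
  set c : ℝ := ‖φ 1‖ with hc
  have hφ1 : φ 1 ≠ 0 := by
    intro h
    apply hφ
    exact AddMonoidHom.ext_int (by simp [h])
  have hcpos : 0 < c := by
    simpa [hc] using (norm_pos_iff.mpr hφ1)
  -- key bound: c * n ≤ f (log (1 + n)) for natural n
  have key : ∀ n : ℕ, c * n ≤ f (Real.log (1 + (n : ℝ))) := by
    intro n
    have h1 : φ (n : ℤ) = (n : ℤ) • φ 1 := by
      have : φ (n : ℤ) = φ ((n : ℤ) • (1 : ℤ)) := by norm_num
      rw [this, map_zsmul]
    have h2 : ‖φ (n : ℤ)‖ = c * n := by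
      rw [h1, zsmul_eq_mul]
      rw [norm_mul]
      push_cast
      simp [hc, mul_comm]
    have := hbound (n : ℤ)
    rw [h2] at this
    simpa using this
  -- frequently bound
  have hfreq : ∀ r : ℝ, r < c → ∃ᶠ x in atTop, r ≤ f x * Real.exp (-x) := by
    intro r hr
    rw [Filter.frequently_atTop]
    intro a
    obtain ⟨n, hn⟩ := exists_nat_gt (max (r / (c - r)) (Real.exp a))
    have hn1 : (r / (c - r)) < n := lt_of_le_of_lt (le_max_left _ _) hn
    have hn2 : Real.exp a < n := lt_of_le_of_lt (le_max_right _ _) hn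
    have hpos : (0 : ℝ) < 1 + n := by positivity
    refine ⟨Real.log (1 + n), ?_, ?_⟩
    · calc a = Real.log (Real.exp a) := (Real.log_exp a).symm
        _ ≤ Real.log (1 + n) := Real.log_le_log (Real.exp_pos a) (by linarith)
    · have hexp : Real.exp (-(Real.log (1 + (n:ℝ)))) = (1 + (n:ℝ))⁻¹ := by
        rw [Real.exp_neg, Real.exp_log hpos]
      rw [hexp]
      have h1 : c * n ≤ f (Real.log (1 + n)) := key n
      have h2 : r * (1 + n) ≤ c * n := by
        have hcr : 0 < c - r := by linarith
        have : r < n * (c - r) := by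
          rw [div_lt_iff₀ hcr] at hn1
          linarith
        nlinarith
      calc r = r * (1 + (n:ℝ)) * (1 + (n:ℝ))⁻¹ := by field_simp
        _ ≤ f (Real.log (1 + (n:ℝ))) * (1 + (n:ℝ))⁻¹ := by
            apply mul_le_mul_of_nonneg_right (le_trans h2 h1)
            positivity
  refine ⟨hcpos, ?_, ?_⟩
  · -- limsup bound
    apply le_of_forall_lt_imp_le_of_dense
    intro b hb
    induction b with
    | bot => exact bot_le
    | top => exact absurd hb (not_lt.mpr le_top)
    | coe r =>
      have hr : r < c := by exact_mod_cast hb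
      apply Filter.le_limsup_of_frequently_le'
      exact (hfreq r hr).mono fun x hx => by exact_mod_cast hx
  · intro htend
    have h := hfreq (c / 2) (by linarith)
    have hev : ∀ᶠ x in atTop, f x * Real.exp (-x) < c / 2 := by
      have := htend.eventually (gt_mem_nhds (show (0:ℝ) < c / 2 by linarith))
      exact this
    obtain ⟨x, hx1, hx2⟩ := (h.and_eventually hev).exists
    linarith
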